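/- arXiv:1405.5317 — 3 statements merged into one kernel-verified Lean document; each statement's English description precedes it below -/
import Mathlib

section
/- Let H be a complex Hilbert space, C a bounded linear operator on H, n ≥ 1 an integer, and let P be the orthogonal projection onto the kernel of Cⁿ. Then ‖C∘P‖² ≤ (n−1)·‖C C* − C* C‖ and ‖C*∘P‖² ≤ n·‖C C* − C* C‖ (operator norms; C* is the Hilbert-space adjoint of C). -/
open ContinuousLinearMap RCLike

local notation "⟪" x ", " y "⟫" => @inner ℂ _ _ x y

private lemma buchholz_key {H : Type*} [NormedAddCommGroup H] [InnerProductSpace ℂ H]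
    [CompleteSpace H] (C : H →L[ℂ] H) (n : ℕ) :
    (∀ x ∈ LinearMap.ker ((C ^ n : H →L[ℂ] H) : H →ₗ[ℂ] H),
      ‖C x‖ ^ 2 ≤ ((n : ℝ) - 1) *
        ‖C * ContinuousLinearMap.adjoint C - ContinuousLinearMap.adjoint C * C‖ * ‖x‖ ^ 2) ∧
    (∀ x ∈ LinearMap.ker ((C ^ n : H →L[ℂ] H) : H →ₗ[ℂ] H),
      ‖ContinuousLinearMap.adjoint C x‖ ^ 2 ≤ (n : ℝ) *
        ‖C * ContinuousLinearMap.adjoint C - ContinuousLinearMap.adjoint C * C‖ * ‖x‖ ^ 2) := by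
  set D := C * ContinuousLinearMap.adjoint C - ContinuousLinearMap.adjoint C * C with hD
  have hd : (0:ℝ) ≤ ‖D‖ := norm_nonneg _
  -- the basic commutator identity / estimate
  have hid : ∀ x : H, ‖ContinuousLinearMap.adjoint C x‖ ^ 2 ≤ ‖C x‖ ^ 2 + ‖D‖ * ‖x‖ ^ 2 := by
    intro x
    have h1 : re ⟪D x, x⟫ = ‖ContinuousLinearMap.adjoint C x‖ ^ 2 - ‖C x‖ ^ 2 := by
      have e1 : ⟪C (ContinuousLinearMap.adjoint C x), x⟫
          = ⟪ContinuousLinearMap.adjoint C x, ContinuousLinearMap.adjoint C x⟫ :=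
        (adjoint_inner_right C (ContinuousLinearMap.adjoint C x) x).symm
      have e2 : ⟪ContinuousLinearMap.adjoint C (C x), x⟫ = ⟪C x, C x⟫ :=
        adjoint_inner_left C x (C x)
      simp only [hD, ContinuousLinearMap.sub_apply, ContinuousLinearMap.mul_apply,
        inner_sub_left, map_sub, e1, e2, inner_self_eq_norm_sq]
    have h2 : re ⟪D x, x⟫ ≤ ‖D‖ * ‖x‖ ^ 2 := by
      calc re ⟪D x, x⟫ ≤ |re ⟪D x, x⟫| := le_abs_self _
        _ ≤ ‖⟪D x, x⟫‖ := abs_re_le_norm _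
        _ ≤ ‖D x‖ * ‖x‖ := norm_inner_le_norm _ _
        _ ≤ ‖D‖ * ‖x‖ * ‖x‖ := by gcongr; exact le_opNorm D x
        _ = ‖D‖ * ‖x‖ ^ 2 := by ring
    linarith
  induction n with
  | zero =>
    constructor <;> intro x hx <;>
    · have : x = 0 := by simpa [LinearMap.mem_ker] using hx
      simp [this]
  | succ n ih =>
    have hA : ∀ x ∈ LinearMap.ker ((C ^ (n + 1) : H →L[ℂ] H) : H →ₗ[ℂ] H),
        ‖C x‖ ^ 2 ≤ (n : ℝ) * ‖D‖ * ‖x‖ ^ 2 := by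
      intro x hx
      have hCx : C x ∈ LinearMap.ker ((C ^ n : H →L[ℂ] H) : H →ₗ[ℂ] H) := by
        rw [LinearMap.mem_ker] at hx ⊢
        rw [pow_succ] at hx
        simpa using hx
      have h2 := ih.2 (C x) hCx
      have h1 : ‖C x‖ ^ 2 ≤ ‖ContinuousLinearMap.adjoint C (C x)‖ * ‖x‖ := by
        have e : (‖C x‖:ℝ) ^ 2 = re ⟪ContinuousLinearMap.adjoint C (C x), x⟫ := by
          rw [adjoint_inner_left, inner_self_eq_norm_sq]
        rw [e]
        calc re ⟪ContinuousLinearMap.adjoint C (C x), x⟫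
            ≤ |re ⟪ContinuousLinearMap.adjoint C (C x), x⟫| := le_abs_self _
          _ ≤ ‖⟪ContinuousLinearMap.adjoint C (C x), x⟫‖ := abs_re_le_norm _
          _ ≤ ‖ContinuousLinearMap.adjoint C (C x)‖ * ‖x‖ := norm_inner_le_norm _ _
      by_cases hz : ‖C x‖ = 0
      · have hnn : (0:ℝ) ≤ (n:ℝ) * ‖D‖ * ‖x‖ ^ 2 := by positivity
        simpa [hz] using hnn
      · have hp : 0 < ‖C x‖ := lt_of_le_of_ne (norm_nonneg _) (Ne.symm hz)
        have h1' : (‖C x‖ ^ 2) ^ 2 ≤ (‖ContinuousLinearMap.adjoint C (C x)‖ * ‖x‖) ^ 2 :=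
          pow_le_pow_left₀ (by positivity) h1 2
        nlinarith [sq_nonneg ‖x‖, mul_pos hp hp, sq_nonneg (‖ContinuousLinearMap.adjoint C (C x)‖)]
    refine ⟨fun x hx => ?_, fun x hx => ?_⟩
    · have := hA x hx
      push_cast
      linarith
    · have h1 := hA x hx
      have h2 := hid x
      push_cast
      nlinarith [sq_nonneg ‖x‖]


/-- **Buchholz's lemma.** Let `H` be a complex Hilbert space, `C` a bounded linear
operator on `H`, `n ≥ 1`, and `P` the orthogonal projection onto the kernel of `Cⁿ`
(characterized as the idempotent self-adjoint bounded operator whose range is `ker (Cⁿ)`).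
Then `‖C P‖² ≤ (n−1)·‖C C* − C* C‖` and `‖C* P‖² ≤ n·‖C C* − C* C‖`. -/
theorem stmt0 {H : Type*} [NormedAddCommGroup H] [InnerProductSpace ℂ H] [CompleteSpace H]
    (C : H →L[ℂ] H) (n : ℕ) (hn : 1 ≤ n)
    (P : H →L[ℂ] H)
    (hPidem : P * P = P)
    (hPsa : ContinuousLinearMap.adjoint P = P)
    (hPrange : LinearMap.range (P : H →ₗ[ℂ] H) = LinearMap.ker ((C ^ n : H →L[ℂ] H) : H →ₗ[ℂ] H)) :
    ‖C * P‖ ^ 2 ≤ ((n : ℝ) - 1) *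
        ‖C * ContinuousLinearMap.adjoint C - ContinuousLinearMap.adjoint C * C‖ ∧
    ‖ContinuousLinearMap.adjoint C * P‖ ^ 2 ≤ (n : ℝ) *
        ‖C * ContinuousLinearMap.adjoint C - ContinuousLinearMap.adjoint C * C‖ := by
  obtain ⟨keyA, keyB⟩ := buchholz_key C n
  set D := C * ContinuousLinearMap.adjoint C - ContinuousLinearMap.adjoint C * C with hD
  have hd : (0:ℝ) ≤ ‖D‖ := norm_nonneg _
  have hn1 : (0:ℝ) ≤ (n:ℝ) - 1 := by
    have : (1:ℝ) ≤ (n:ℝ) := by exact_mod_cast hn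
    linarith
  -- P is a contraction
  have hPle : ∀ x : H, ‖P x‖ ≤ ‖x‖ := by
    intro x
    by_cases h0 : ‖P x‖ = 0
    · rw [h0]; positivity
    · have hp : 0 < ‖P x‖ := lt_of_le_of_ne (norm_nonneg _) (Ne.symm h0)
      have hpp : P (P x) = P x := by
        conv_rhs => rw [← hPidem]
        rfl
      have e : ⟪P x, P x⟫ = ⟪x, P x⟫ := by
        calc ⟪P x, P x⟫ = ⟪(ContinuousLinearMap.adjoint P) x, P x⟫ := by rw [hPsa]
          _ = ⟪x, P (P x)⟫ := adjoint_inner_left P (P x) x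
          _ = ⟪x, P x⟫ := by rw [hpp]
      have h1 : ‖P x‖ ^ 2 ≤ ‖x‖ * ‖P x‖ := by
        have : (‖P x‖:ℝ) ^ 2 = re ⟪x, P x⟫ := by
          rw [← e, inner_self_eq_norm_sq]
        rw [this]
        calc re ⟪x, P x⟫ ≤ |re ⟪x, P x⟫| := le_abs_self _
          _ ≤ ‖⟪x, P x⟫‖ := abs_re_le_norm _
          _ ≤ ‖x‖ * ‖P x‖ := norm_inner_le_norm _ _
      nlinarith
  have hmem : ∀ x : H, P x ∈ LinearMap.ker ((C ^ n : H →L[ℂ] H) : H →ₗ[ℂ] H) := by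
    intro x
    rw [← hPrange]
    exact ⟨x, rfl⟩
  have gen : ∀ (T : H →L[ℂ] H) (a : ℝ), 0 ≤ a →
      (∀ x ∈ LinearMap.ker ((C ^ n : H →L[ℂ] H) : H →ₗ[ℂ] H), ‖T x‖ ^ 2 ≤ a * ‖x‖ ^ 2) → ‖T * P‖ ^ 2 ≤ a := by
    intro T a ha hbound
    have hb : ‖T * P‖ ≤ Real.sqrt a := by
      apply opNorm_le_bound _ (Real.sqrt_nonneg a)
      intro x
      have h2 := hbound (P x) (hmem x)
      have h3 : ‖T (P x)‖ ≤ Real.sqrt a * ‖P x‖ := by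
        rw [← Real.sqrt_sq (norm_nonneg (T (P x))), ← Real.sqrt_sq (norm_nonneg (P x)),
          ← Real.sqrt_mul ha]
        exact Real.sqrt_le_sqrt h2
      calc ‖(T * P) x‖ = ‖T (P x)‖ := by rw [ContinuousLinearMap.mul_apply]
        _ ≤ Real.sqrt a * ‖P x‖ := h3
        _ ≤ Real.sqrt a * ‖x‖ :=
            mul_le_mul_of_nonneg_left (hPle x) (Real.sqrt_nonneg a)
    calc ‖T * P‖ ^ 2 ≤ Real.sqrt a ^ 2 := pow_le_pow_left₀ (norm_nonneg _) hb 2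
      _ = a := Real.sq_sqrt ha
  exact ⟨gen C (((n:ℝ) - 1) * ‖D‖) (mul_nonneg hn1 hd)
      (fun x hx => by have := keyA x hx; linarith [this]),
    gen (ContinuousLinearMap.adjoint C) ((n:ℝ) * ‖D‖) (mul_nonneg (Nat.cast_nonneg n) hd)
      (fun x hx => by have := keyB x hx; linarith [this])⟩
end

section
/- Let λ > 0 and κ > 0, and let Λ : ℝ⁴ → ℝ⁴ be a linear isomorphism preserving the Minkowski quadratic form q(x) = (x⁰)² − |x⃗|². Then there exists a constant c' > 0 such that D_κ(Λa) ≤ c'·D_κ(a) for all a ∈ ℝ⁴. In particular, if bounded operators B₁, B₂ on a Hilbert space satisfy ‖[B₁, B₂(a)]‖ ≤ c·D_κ(a) for all a, then ‖[B₁, B₂(Λa)]‖ ≤ c·c'·D_κ(a) for all a. -/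
noncomputable section

open ContinuousLinearMap

/-- Minkowski space modeled as `ℝ⁴` with the Euclidean structure. -/
abbrev M4 : Type := EuclideanSpace ℝ (Fin 4)

/-- Euclidean norm of the spatial part `a⃗` of `a ∈ ℝ⁴`. -/
def snorm3 (a : M4) : ℝ := Real.sqrt ((a 1) ^ 2 + (a 2) ^ 2 + (a 3) ^ 2)

/-- The commutator-bounding function `D_κ` (with length parameter `lam`). -/
def Dkappa (lam κ : ℝ) (a : M4) : ℝ :=
  if (snorm3 a) ^ 2 ≤ (a 0) ^ 2 then 1
  else lam ^ κ / (lam + snorm3 a - |a 0|) ^ κ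

/-- The Minkowski quadratic form `q(x) = (x⁰)² − |x⃗|²`. -/
def mq (x : M4) : ℝ := (x 0) ^ 2 - ((x 1) ^ 2 + (x 2) ^ 2 + (x 3) ^ 2)

lemma snorm3_nonneg (a : M4) : 0 ≤ snorm3 a := Real.sqrt_nonneg _

lemma snorm3_sq (a : M4) : snorm3 a ^ 2 = (a 1) ^ 2 + (a 2) ^ 2 + (a 3) ^ 2 :=
  Real.sq_sqrt (by positivity)

lemma mq_eq (a : M4) : mq a = (a 0) ^ 2 - snorm3 a ^ 2 := by rw [snorm3_sq]; rfl

lemma norm_sq_eq' (a : M4) : ‖a‖ ^ 2 = (a 0) ^ 2 + snorm3 a ^ 2 := by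
  rw [snorm3_sq, EuclideanSpace.norm_eq, Real.sq_sqrt (by positivity)]
  simp [Fin.sum_univ_four, Real.norm_eq_abs, sq_abs]
  ring

lemma norm_le' (a : M4) : ‖a‖ ≤ |a 0| + snorm3 a := by
  have h : ‖a‖ ^ 2 ≤ (|a 0| + snorm3 a) ^ 2 := by
    rw [norm_sq_eq']
    nlinarith [abs_nonneg (a 0), snorm3_nonneg a, sq_abs (a 0)]
  have := Real.sqrt_le_sqrt h
  rwa [Real.sqrt_sq (norm_nonneg a), Real.sqrt_sq (add_nonneg (abs_nonneg _) (snorm3_nonneg a))] at this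

lemma spatial_le (a : M4) : snorm3 a + |a 0| ≤ Real.sqrt 2 * ‖a‖ := by
  have h : (snorm3 a + |a 0|) ^ 2 ≤ (Real.sqrt 2 * ‖a‖) ^ 2 := by
    rw [mul_pow, Real.sq_sqrt (by norm_num), norm_sq_eq']
    nlinarith [sq_nonneg (snorm3 a - |a 0|), sq_abs (a 0)]
  have := Real.sqrt_le_sqrt h
  rwa [Real.sqrt_sq (add_nonneg (snorm3_nonneg a) (abs_nonneg _)), Real.sqrt_sq (mul_nonneg (Real.sqrt_nonneg 2) (norm_nonneg a))] at this

lemma Dkappa_pos (lam κ : ℝ) (hlam : 0 < lam) (a : M4) : 0 < Dkappa lam κ a := by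
  unfold Dkappa
  split
  · norm_num
  · rename_i h
    push_neg at h
    have habs : |a 0| < snorm3 a := by
      nlinarith [abs_nonneg (a 0), sq_abs (a 0), snorm3_nonneg a]
    exact div_pos (Real.rpow_pos_of_pos hlam κ) (Real.rpow_pos_of_pos (by linarith) κ)

lemma key (lam κ : ℝ) (hlam : 0 < lam) (hκ : 0 < κ) (Λ : M4 ≃ₗ[ℝ] M4)
    (hΛ : ∀ x, mq (Λ x) = mq x) :
    ∃ c' : ℝ, 0 < c' ∧ ∀ a : M4, Dkappa lam κ (Λ a) ≤ c' * Dkappa lam κ a := by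
  set T : M4 →L[ℝ] M4 := LinearMap.toContinuousLinearMap (Λ : M4 →ₗ[ℝ] M4) with hT
  set N : ℝ := Real.sqrt 2 * ‖T‖ with hN
  have hN0 : 0 ≤ N := mul_nonneg (Real.sqrt_nonneg 2) (norm_nonneg T)
  set C : ℝ := N + 1 with hC
  have hC1 : (1:ℝ) ≤ C := by linarith
  have hC0 : (0:ℝ) < C := by linarith
  refine ⟨C ^ κ, Real.rpow_pos_of_pos hC0 κ, fun a => ?_⟩
  have hc'1 : (1:ℝ) ≤ C ^ κ := by
    calc (1:ℝ) = 1 ^ κ := (Real.one_rpow κ).symm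
    _ ≤ C ^ κ := Real.rpow_le_rpow (by norm_num) hC1 hκ.le
  have hmq : mq (Λ a) = mq a := hΛ a
  by_cases htl : snorm3 a ^ 2 ≤ (a 0) ^ 2
  · -- timelike: both sides 1
    have htl' : snorm3 (Λ a) ^ 2 ≤ ((Λ a : M4) 0) ^ 2 := by
      have h1 := mq_eq a
      have h2 := mq_eq (Λ a)
      nlinarith [hmq]
    rw [Dkappa, Dkappa, if_pos htl, if_pos htl']
    linarith
  · have htl' : ¬ snorm3 (Λ a) ^ 2 ≤ ((Λ a : M4) 0) ^ 2 := by
      have h1 := mq_eq a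
      have h2 := mq_eq (Λ a)
      intro hcon
      nlinarith [hmq]
    push_neg at htl htl'
    set s := snorm3 a
    set t := |a 0|
    set sb := snorm3 (Λ a)
    set tb := |(Λ a : M4) 0|
    have hts : t < s := by
      nlinarith [abs_nonneg (a 0), sq_abs (a 0), snorm3_nonneg a]
    have htsb : tb < sb := by
      nlinarith [abs_nonneg ((Λ a : M4) 0), sq_abs ((Λ a : M4) 0), snorm3_nonneg (Λ a)]
    have ht0 : 0 ≤ t := abs_nonneg _
    have htb0 : 0 ≤ tb := abs_nonneg _
    have h1 : sb ^ 2 - tb ^ 2 = s ^ 2 - t ^ 2 := by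
      have e1 := mq_eq a
      have e2 := mq_eq (Λ a)
      have : sb ^ 2 - ((Λ a : M4) 0) ^ 2 = s ^ 2 - (a 0) ^ 2 := by
        rw [mq_eq] at hmq; rw [mq_eq] at hmq; linarith
      calc sb ^ 2 - tb ^ 2 = sb ^ 2 - ((Λ a : M4) 0) ^ 2 := by rw [sq_abs]
      _ = s ^ 2 - (a 0) ^ 2 := this
      _ = s ^ 2 - t ^ 2 := by rw [sq_abs]
    have hTa : (Λ a : M4) = T a := rfl
    have h2 : sb + tb ≤ N * (t + s) := by
      calc sb + tb ≤ Real.sqrt 2 * ‖(Λ a : M4)‖ := spatial_le (Λ a)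
      _ ≤ Real.sqrt 2 * (‖T‖ * ‖a‖) := by
          rw [hTa]
          exact mul_le_mul_of_nonneg_left (T.le_opNorm a) (Real.sqrt_nonneg 2)
      _ ≤ Real.sqrt 2 * (‖T‖ * (t + s)) := by
          have := norm_le' a
          have : ‖a‖ ≤ t + s := by rw [add_comm t s]; exact (norm_le' a).trans (by simp [s, t]; linarith [norm_le' a])
          exact mul_le_mul_of_nonneg_left
            (mul_le_mul_of_nonneg_left this (norm_nonneg T)) (Real.sqrt_nonneg 2)
      _ = N * (t + s) := by rw [hN]; ring
    have hst : 0 < s + t := by linarith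
    have h3 : (s - t) * (s + t) ≤ (N * (sb - tb)) * (s + t) := by
      nlinarith [mul_le_mul_of_nonneg_left h2 (sub_nonneg.2 htsb.le)]
    have hd : s - t ≤ N * (sb - tb) := le_of_mul_le_mul_right h3 hst
    have hA : 0 < lam + s - t := by linarith
    have hB : 0 < lam + sb - tb := by linarith
    have hle : lam + s - t ≤ C * (lam + sb - tb) := by nlinarith
    have hpow : (lam + s - t) ^ κ ≤ C ^ κ * (lam + sb - tb) ^ κ := by
      rw [← Real.mul_rpow hC0.le hB.le]
      exact Real.rpow_le_rpow hA.le hle hκ.le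
    rw [Dkappa, Dkappa, if_neg (by push_neg; exact htl'), if_neg (by push_neg; exact htl)]
    have hrw : C ^ κ * (lam ^ κ / (lam + s - t) ^ κ) = (C ^ κ * lam ^ κ) / (lam + s - t) ^ κ :=
      (mul_div_assoc _ _ _).symm
    rw [hrw, div_le_div_iff₀ (Real.rpow_pos_of_pos hB κ) (Real.rpow_pos_of_pos hA κ)]
    calc lam ^ κ * (lam + s - t) ^ κ
        ≤ lam ^ κ * (C ^ κ * (lam + sb - tb) ^ κ) :=
          mul_le_mul_of_nonneg_left hpow (Real.rpow_nonneg hlam.le κ)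
      _ = C ^ κ * lam ^ κ * (lam + sb - tb) ^ κ := by ring

/-- Covariance of the `κ`-type commutator condition: if `Λ` is a linear isomorphism of `ℝ⁴`
preserving the Minkowski quadratic form, then `D_κ(Λa) ≤ c'·D_κ(a)` for some `c' > 0`; in
particular a `κ`-type commutator bound for `B₁, B₂(a)` transfers to `B₁, B₂(Λa)` with
constant `c·c'`. -/
theorem stmt1 (lam κ : ℝ) (hlam : 0 < lam) (hκ : 0 < κ)
    (Λ : M4 ≃ₗ[ℝ] M4) (hΛ : ∀ x, mq (Λ x) = mq x) :
    ∃ c' : ℝ, 0 < c' ∧ (∀ a : M4, Dkappa lam κ (Λ a) ≤ c' * Dkappa lam κ a) ∧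
      ∀ (H : Type) [NormedAddCommGroup H] [InnerProductSpace ℂ H] [CompleteSpace H]
        (U : M4 → H →L[ℂ] H),
        U 0 = 1 → (∀ x y, U (x + y) = U x * U y) →
        (∀ x, adjoint (U x) = U (-x)) → (∀ ψ : H, Continuous fun x => U x ψ) →
        ∀ (B₁ B₂ : H →L[ℂ] H) (c : ℝ),
          (∀ a : M4, ‖B₁ * (U a * B₂ * U (-a)) - (U a * B₂ * U (-a)) * B₁‖
              ≤ c * Dkappa lam κ a) →
          ∀ a : M4, ‖B₁ * (U (Λ a) * B₂ * U (-(Λ a))) - (U (Λ a) * B₂ * U (-(Λ a))) * B₁‖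
              ≤ c * c' * Dkappa lam κ a := by
  obtain ⟨c', hc'pos, hbound⟩ := key lam κ hlam hκ Λ hΛ
  refine ⟨c', hc'pos, hbound, ?_⟩
  intro H _ _ _ U hU0 hUadd hUadj hUcont B₁ B₂ c hc a
  have hc0 : 0 ≤ c := by
    have h0 := hc 0
    have hD0 : Dkappa lam κ 0 = 1 := by
      have hz : ∀ i : Fin 4, (0 : M4) i = 0 := fun i => rfl
      simp [Dkappa, snorm3, hz]
    rw [hD0, mul_one] at h0
    exact le_trans (norm_nonneg _) h0
  calc ‖B₁ * (U (Λ a) * B₂ * U (-(Λ a))) - (U (Λ a) * B₂ * U (-(Λ a))) * B₁‖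
      ≤ c * Dkappa lam κ (Λ a) := hc (Λ a)
    _ ≤ c * (c' * Dkappa lam κ a) := mul_le_mul_of_nonneg_left (hbound a) hc0
    _ = c * c' * Dkappa lam κ a := by ring
end
end

section
/- Let B₁, B₂ be bounded operators on H satisfying ‖[B₁, B₂(a)]‖ ≤ c·D_κ(a) for all a ∈ ℝ⁴. Let f : ℝ → ℂ be measurable with |f(τ)| ≤ C·(λ + |τ|)^{−s} for all τ, where s ≥ 1 + κ. Let B₂(f) be the time-smeared operator B₂(f)ψ = ∫ f(τ) B₂(τ·e₀)ψ dτ, where e₀ = (1,0,0,0). Then there exists a constant c' such that ‖[B₁, (B₂(f))(a)]‖ ≤ c'·D_κ(a) for all a ∈ ℝ⁴. -/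
noncomputable section

open ContinuousLinearMap MeasureTheory

/-- The time-axis unit vector `e₀ = (1,0,0,0)`. -/
def e0 : M4 := EuclideanSpace.single 0 1

namespace Stmt3Aux
open Real Set Filter Topology

variable {lam κ s : ℝ}

/-- The decreasing profile function. -/
def E (lam κ u : ℝ) : ℝ := lam ^ κ / (lam + max u 0) ^ κ

lemma base_pos (hlam : 0 < lam) (u : ℝ) : 0 < lam + max u 0 :=
  add_pos_of_pos_of_nonneg hlam (le_max_right u 0)

lemma E_pos (hlam : 0 < lam) (u : ℝ) : 0 < E lam κ u :=
  div_pos (rpow_pos_of_pos hlam κ) (rpow_pos_of_pos (base_pos hlam u) κ)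

lemma E_le_one (hlam : 0 < lam) (hκ : 0 ≤ κ) (u : ℝ) : E lam κ u ≤ 1 := by
  rw [E, div_le_one (rpow_pos_of_pos (base_pos hlam u) κ)]
  exact rpow_le_rpow hlam.le (le_add_of_nonneg_right (le_max_right u 0)) hκ

lemma E_anti (hlam : 0 < lam) (hκ : 0 ≤ κ) {u v : ℝ} (h : u ≤ v) :
    E lam κ v ≤ E lam κ u := by
  apply div_le_div_of_nonneg_left (rpow_nonneg hlam.le κ) (rpow_pos_of_pos (base_pos hlam u) κ)
  apply rpow_le_rpow (base_pos hlam u).le _ hκ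
  have := max_le_max h (le_refl (0:ℝ))
  linarith

lemma E_cont (hlam : 0 < lam) (hκ : 0 ≤ κ) : Continuous (E lam κ) := by
  apply continuous_const.div
  · exact (continuous_const.add (continuous_id.max continuous_const)).rpow_const
      fun u => Or.inl (base_pos hlam u).ne'
  · exact fun u => (rpow_pos_of_pos (base_pos hlam u) κ).ne'

lemma E_shift (hv : 0 ≤ v) (u : ℝ) : E lam κ (u - v) = E lam κ (max u 0 - v) := by
  have h : max (u - v) 0 = max (max u 0 - v) 0 := by
    rcases le_total u 0 with h | h
    · rw [max_eq_right h, zero_sub, max_eq_right (by linarith), max_eq_right (by linarith)]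
    · rw [max_eq_left h]
  rw [E, E, h]

lemma E_half (hlam : 0 < lam) (hκ : 0 ≤ κ) {d : ℝ} (hd : 0 ≤ d) :
    E lam κ (d / 2) ≤ 2 ^ κ * E lam κ d := by
  rw [E, E, max_eq_left (by linarith), max_eq_left hd, mul_div_assoc']
  rw [div_le_div_iff₀ (rpow_pos_of_pos (by linarith) κ) (rpow_pos_of_pos (by linarith) κ)]
  have h1 : (lam + d) ^ κ ≤ 2 ^ κ * (lam + d / 2) ^ κ := by
    rw [← Real.mul_rpow (by norm_num) (by linarith)]
    exact rpow_le_rpow (by linarith) (by linarith) hκ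
  have h2 : (0:ℝ) ≤ lam ^ κ := rpow_nonneg hlam.le κ
  calc lam ^ κ * (lam + d) ^ κ ≤ lam ^ κ * (2 ^ κ * (lam + d / 2) ^ κ) :=
        mul_le_mul_of_nonneg_left h1 h2
    _ = 2 ^ κ * lam ^ κ * (lam + d / 2) ^ κ := by ring







lemma intOn_Ioi (hlam : 0 < lam) {p : ℝ} (hp : 1 < p) {c : ℝ} (hc : 0 ≤ c) :
    IntegrableOn (fun τ : ℝ => (lam + τ) ^ (-p)) (Ioi c) ∧
    ∫ τ in Ioi c, (lam + τ) ^ (-p) = (lam + c) ^ (1 - p) / (p - 1) := by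
  have h1p : (1:ℝ) - p ≠ 0 := by intro h; linarith [h]
  have hderiv : ∀ x ∈ Ici c,
      HasDerivAt (fun τ : ℝ => (lam + τ) ^ (1 - p) / (1 - p)) ((lam + x) ^ (-p)) x := by
    intro x hx
    have hx0 : (0:ℝ) < lam + x := by have := hx.out; linarith
    have h1 : HasDerivAt (fun τ : ℝ => lam + τ) 1 x := (hasDerivAt_id x).const_add lam
    have h2 := (Real.hasDerivAt_rpow_const (x := lam + x) (p := 1 - p)
      (Or.inl hx0.ne')).comp x h1
    have h3 := h2.div_const (1 - p)
    refine HasDerivAt.congr_deriv h3 ?_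
    rw [mul_one, mul_comm, mul_div_assoc, div_self h1p, mul_one,
      show (1:ℝ) - p - 1 = -p by ring]
  have htend : Tendsto (fun τ : ℝ => (lam + τ) ^ (1 - p) / (1 - p)) atTop (𝓝 0) := by
    rw [show (0:ℝ) = 0 / (1 - p) by simp]
    apply Tendsto.div_const
    have h0 : Tendsto (fun τ : ℝ => lam + τ) atTop atTop :=
      tendsto_atTop_add_const_left _ lam tendsto_id
    have := (tendsto_rpow_neg_atTop (by linarith : (0:ℝ) < p - 1)).comp h0
    simpa [show -(p - 1) = 1 - p by ring, Function.comp_def] using this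
  have hint := integrableOn_Ioi_deriv_of_nonneg' hderiv
    (fun x hx => rpow_nonneg (by have : c < x := hx; linarith) _) htend
  refine ⟨hint, ?_⟩
  rw [integral_Ioi_of_hasDerivAt_of_tendsto' hderiv hint htend, zero_sub,
    show (1:ℝ) - p = -(p - 1) by ring, div_neg, neg_neg,
    show -(p - 1) = 1 - p by ring]

lemma integrable_abs_rpow (hlam : 0 < lam) {p : ℝ} (hp : 1 < p) :
    Integrable (fun τ : ℝ => (lam + |τ|) ^ (-p)) := by
  have h0 : IntegrableOn (fun τ : ℝ => (lam + |τ|) ^ (-p)) (Ioi 0) := by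
    refine ((intOn_Ioi hlam hp le_rfl).1).congr_fun ?_ measurableSet_Ioi
    intro x hx
    show (lam + x) ^ (-p) = (lam + |x|) ^ (-p)
    rw [abs_of_pos hx]
  have hIic : IntegrableOn (fun τ : ℝ => (lam + |τ|) ^ (-p)) (Iic 0) := by
    rw [← Measure.map_neg_eq_self (volume : Measure ℝ)]
    have m : MeasurableEmbedding fun x : ℝ => -x := (Homeomorph.neg ℝ).measurableEmbedding
    rw [m.integrableOn_map_iff]
    simp_rw [Function.comp_def, abs_neg, neg_preimage, neg_Iic, neg_zero]
    exact (integrableOn_Ici_iff_integrableOn_Ioi).mpr h0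
  have hu := hIic.union h0
  rwa [Iic_union_Ioi, integrableOn_univ] at hu

lemma tail_eval (hlam : 0 < lam) {κ : ℝ} (hκ : 0 < κ) {c2 : ℝ} (hc2 : 0 ≤ c2) :
    ∫ τ in (Icc (-c2) c2)ᶜ, (lam + |τ|) ^ (-(1 + κ)) = 2 * ((lam + c2) ^ (-κ) / κ) := by
  have hone : (1:ℝ) < 1 + κ := by linarith
  have hIoi := intOn_Ioi hlam hone hc2
  have hint := integrable_abs_rpow hlam hone
  have habs : ∫ τ in Ioi c2, (lam + |τ|) ^ (-(1 + κ)) = (lam + c2) ^ (-κ) / κ := by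
    rw [setIntegral_congr_fun measurableSet_Ioi
      (fun x hx => by rw [abs_of_pos (lt_of_le_of_lt hc2 hx)]), hIoi.2,
      show (1:ℝ) - (1 + κ) = -κ by ring, show (1:ℝ) + κ - 1 = κ by ring]
  have hIio : ∫ τ in Iio (-c2), (lam + |τ|) ^ (-(1 + κ)) = (lam + c2) ^ (-κ) / κ := by
    rw [setIntegral_congr_set Iio_ae_eq_Iic]
    calc ∫ τ in Iic (-c2), (lam + |τ|) ^ (-(1 + κ))
        = ∫ τ in Iic (-c2), (fun y : ℝ => (lam + |y|) ^ (-(1 + κ))) (-τ) := by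
          simp only [abs_neg]
      _ = ∫ τ in Ioi (-(-c2)), (lam + |τ|) ^ (-(1 + κ)) :=
          integral_comp_neg_Iic (-c2) (fun y : ℝ => (lam + |y|) ^ (-(1 + κ)))
      _ = (lam + c2) ^ (-κ) / κ := by rw [neg_neg, habs]
  have hdisj : Disjoint (Iio (-c2)) (Ioi c2) := by
    rw [Set.disjoint_left]
    intro x hx hx'
    simp only [mem_Iio, mem_Ioi] at hx hx'
    linarith
  have hcompl : (Icc (-c2) c2)ᶜ = Iio (-c2) ∪ Ioi c2 := by
    ext x
    simp only [mem_compl_iff, mem_Icc, mem_union, mem_Iio, mem_Ioi, not_and_or, not_le]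
  rw [hcompl, setIntegral_union hdisj measurableSet_Ioi hint.integrableOn
    hint.integrableOn, hIio, habs]
  ring



lemma g_cont (hlam : 0 < lam) (hκ : 0 ≤ κ) (d : ℝ) :
    Continuous fun τ : ℝ => (lam + |τ|) ^ (-s) * E lam κ (d - |τ|) := by
  apply Continuous.mul
  · exact (continuous_const.add continuous_abs).rpow_const
      fun x => Or.inl (by positivity : lam + |x| ≠ 0)
  · exact (E_cont hlam hκ).comp (continuous_const.sub continuous_abs)

lemma g_int (hlam : 0 < lam) (hκ : 0 ≤ κ) (hs1 : 1 < s) (d : ℝ) :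
    Integrable fun τ : ℝ => (lam + |τ|) ^ (-s) * E lam κ (d - |τ|) := by
  apply Integrable.mono' (integrable_abs_rpow hlam hs1)
    (g_cont hlam hκ d).aestronglyMeasurable
  refine ae_of_all _ fun τ => ?_
  have h1 : (0:ℝ) ≤ (lam + |τ|) ^ (-s) := rpow_nonneg (by positivity) _
  have h2 := (E_pos (κ := κ) hlam (d - |τ|)).le
  have h3 := E_le_one (κ := κ) hlam hκ (d - |τ|)
  rw [Real.norm_eq_abs, abs_of_nonneg (mul_nonneg h1 h2)]
  calc (lam + |τ|) ^ (-s) * E lam κ (d - |τ|) ≤ (lam + |τ|) ^ (-s) * 1 :=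
        mul_le_mul_of_nonneg_left h3 h1
    _ = (lam + |τ|) ^ (-s) := mul_one _

lemma core (hlam : 0 < lam) (hκ : 0 < κ) (hs : 1 + κ ≤ s) :
    ∃ K : ℝ, 0 ≤ K ∧ ∀ d : ℝ, 0 ≤ d →
      (∫ τ : ℝ, (lam + |τ|) ^ (-s) * E lam κ (d - |τ|)) ≤ K * E lam κ d := by
  have hs1 : (1:ℝ) < s := by linarith
  have hJint : Integrable (fun τ : ℝ => (lam + |τ|) ^ (-s)) := integrable_abs_rpow hlam hs1
  set J := ∫ τ : ℝ, (lam + |τ|) ^ (-s) with hJ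
  have hJ0 : 0 ≤ J := integral_nonneg fun τ => rpow_nonneg (by positivity) _
  refine ⟨2 ^ κ * J + lam ^ (1 + κ - s) * (2 * (2 ^ κ * lam ^ (-κ) / κ)), by positivity, ?_⟩
  intro d hd
  set c2 := d / 2 with hc2def
  have hc2 : 0 ≤ c2 := by positivity
  have hgint := g_int (s := s) hlam hκ.le hs1 d
  have hE0 := (E_pos (κ := κ) hlam d).le
  have hsplit := (integral_add_compl (measurableSet_Icc (a := -c2) (b := c2)) hgint).symm
  rw [hsplit]
  have hterm1 : (∫ τ in Icc (-c2) c2, (lam + |τ|) ^ (-s) * E lam κ (d - |τ|))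
      ≤ J * (2 ^ κ * E lam κ d) := by
    have step1 : (∫ τ in Icc (-c2) c2, (lam + |τ|) ^ (-s) * E lam κ (d - |τ|))
        ≤ ∫ τ in Icc (-c2) c2, (lam + |τ|) ^ (-s) * (2 ^ κ * E lam κ d) := by
      apply setIntegral_mono_on hgint.integrableOn
        (hJint.mul_const _).integrableOn measurableSet_Icc
      intro τ hτ
      have habs : |τ| ≤ c2 := abs_le.2 ⟨hτ.1, hτ.2⟩
      have h1 : E lam κ (d - |τ|) ≤ E lam κ (d / 2) :=
        E_anti hlam hκ.le (by rw [hc2def] at habs; linarith)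
      have h2 := E_half hlam hκ.le hd
      exact mul_le_mul_of_nonneg_left (h1.trans h2) (rpow_nonneg (by positivity) _)
    rw [integral_mul_const] at step1
    refine step1.trans (mul_le_mul_of_nonneg_right ?_ (by positivity))
    exact setIntegral_le_integral hJint
      (ae_of_all _ fun τ => rpow_nonneg (by positivity) _)
  have hterm2 : (∫ τ in (Icc (-c2) c2)ᶜ, (lam + |τ|) ^ (-s) * E lam κ (d - |τ|))
      ≤ lam ^ (1 + κ - s) * (2 * (2 ^ κ * lam ^ (-κ) / κ)) * E lam κ d := by
    have hone : (1:ℝ) < 1 + κ := by linarith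
    have step1 : (∫ τ in (Icc (-c2) c2)ᶜ, (lam + |τ|) ^ (-s) * E lam κ (d - |τ|))
        ≤ ∫ τ in (Icc (-c2) c2)ᶜ, lam ^ (1 + κ - s) * (lam + |τ|) ^ (-(1 + κ)) := by
      apply setIntegral_mono_on hgint.integrableOn
        (((integrable_abs_rpow hlam hone).const_mul _)).integrableOn
        measurableSet_Icc.compl
      intro τ _
      have hb : (0:ℝ) < lam + |τ| := by positivity
      have e1 : E lam κ (d - |τ|) ≤ 1 := E_le_one hlam hκ.le _
      have e2 : (lam + |τ|) ^ (-s) ≤ lam ^ (1 + κ - s) * (lam + |τ|) ^ (-(1 + κ)) := by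
        have hsplit2 : (lam + |τ|) ^ (-s)
            = (lam + |τ|) ^ (1 + κ - s) * (lam + |τ|) ^ (-(1 + κ)) := by
          rw [← Real.rpow_add hb]
          congr 1
          ring
        rw [hsplit2]
        exact mul_le_mul_of_nonneg_right
          (Real.rpow_le_rpow_of_nonpos hlam (le_add_of_nonneg_right (abs_nonneg τ)) (by linarith))
          (rpow_nonneg hb.le _)
      calc (lam + |τ|) ^ (-s) * E lam κ (d - |τ|) ≤ (lam + |τ|) ^ (-s) * 1 :=
            mul_le_mul_of_nonneg_left e1 (rpow_nonneg hb.le _)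
        _ = (lam + |τ|) ^ (-s) := mul_one _
        _ ≤ lam ^ (1 + κ - s) * (lam + |τ|) ^ (-(1 + κ)) := e2
    rw [integral_const_mul, tail_eval hlam hκ hc2] at step1
    refine step1.trans ?_
    have hEd : E lam κ d = lam ^ κ / (lam + d) ^ κ := by rw [E, max_eq_left hd]
    have hkey : (lam + c2) ^ (-κ) ≤ 2 ^ κ * lam ^ (-κ) * E lam κ d := by
      have h1 : (lam + d) ^ κ ≤ 2 ^ κ * (lam + c2) ^ κ := by
        rw [← Real.mul_rpow (by norm_num) (by positivity)]
        exact rpow_le_rpow (by linarith) (by rw [hc2def]; linarith) hκ.le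
      have h2 : (0:ℝ) < (lam + c2) ^ κ := rpow_pos_of_pos (by linarith) _
      have h3 : (0:ℝ) < (lam + d) ^ κ := rpow_pos_of_pos (by linarith) _
      have h4 : (0:ℝ) < lam ^ κ := rpow_pos_of_pos hlam _
      rw [hEd, Real.rpow_neg (by linarith), Real.rpow_neg hlam.le]
      have h5 : 2 ^ κ * (lam ^ κ)⁻¹ * (lam ^ κ / (lam + d) ^ κ) = 2 ^ κ / (lam + d) ^ κ := by
        field_simp
      rw [h5, inv_eq_one_div, div_le_div_iff₀ h2 h3, one_mul]
      calc (lam + d) ^ κ ≤ 2 ^ κ * (lam + c2) ^ κ := h1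
        _ = 2 ^ κ * (lam + c2) ^ κ := rfl
    calc lam ^ (1 + κ - s) * (2 * ((lam + c2) ^ (-κ) / κ))
        ≤ lam ^ (1 + κ - s) * (2 * ((2 ^ κ * lam ^ (-κ) * E lam κ d) / κ)) := by
          apply mul_le_mul_of_nonneg_left _ (rpow_nonneg hlam.le _)
          apply mul_le_mul_of_nonneg_left _ (by norm_num)
          exact div_le_div_of_nonneg_right hkey hκ.le
      _ = lam ^ (1 + κ - s) * (2 * (2 ^ κ * lam ^ (-κ) / κ)) * E lam κ d := by ring
  linarith

lemma Dkappa_eq (hlam : 0 < lam) (a : M4) :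
    Dkappa lam κ a = E lam κ (snorm3 a - |a 0|) := by
  have hr : 0 ≤ snorm3 a := Real.sqrt_nonneg _
  rw [Dkappa, E]
  rcases le_or_gt (snorm3 a) |a 0| with h | h
  · rw [if_pos, max_eq_right (by linarith), add_zero,
      div_self (Real.rpow_pos_of_pos hlam κ).ne']
    calc (snorm3 a) ^ 2 ≤ |a 0| ^ 2 := by nlinarith
      _ = (a 0) ^ 2 := sq_abs _
  · rw [if_neg, max_eq_left (by linarith), add_sub_assoc]
    push_neg
    calc (a 0) ^ 2 = |a 0| ^ 2 := (sq_abs _).symm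
      _ < (snorm3 a) ^ 2 := by nlinarith [abs_nonneg (a 0)]

lemma comp0 (a : M4) (τ : ℝ) : (a + τ • e0) 0 = a 0 + τ := by
  simp [e0, EuclideanSpace.single_apply, PiLp.add_apply, PiLp.smul_apply]

lemma snorm3_shift (a : M4) (τ : ℝ) : snorm3 (a + τ • e0) = snorm3 a := by
  have h : ∀ i : Fin 4, i ≠ 0 → (a + τ • e0) i = a i := by
    intro i hi
    simp [e0, EuclideanSpace.single_apply, PiLp.add_apply, PiLp.smul_apply, hi]
  rw [snorm3, snorm3, h 1 (by decide), h 2 (by decide), h 3 (by decide)]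

end Stmt3Aux

open Stmt3Aux Filter Topology

/-- Stability of the `κ`-type condition under time smearing (Lemma `stability` (ii)):
if `‖[B₁, B₂(a)]‖ ≤ c·D_κ(a)` and `|f(τ)| ≤ C·(λ+|τ|)^{−s}` with `s ≥ 1 + κ`, then
the commutator of `B₁` with the time-smeared operator `B₂(f)` is again of `κ`-type. -/
theorem stmt3 {H : Type*} [NormedAddCommGroup H] [InnerProductSpace ℂ H] [CompleteSpace H]
    (lam κ : ℝ) (hlam : 0 < lam) (hκ : 0 < κ)
    (U : M4 → H →L[ℂ] H)
    (hU0 : U 0 = 1) (hUadd : ∀ x y, U (x + y) = U x * U y)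
    (hUadj : ∀ x, adjoint (U x) = U (-x)) (hUcont : ∀ ψ : H, Continuous fun x => U x ψ)
    (B₁ B₂ : H →L[ℂ] H) (c : ℝ)
    (hcomm : ∀ a : M4, ‖B₁ * (U a * B₂ * U (-a)) - (U a * B₂ * U (-a)) * B₁‖
        ≤ c * Dkappa lam κ a)
    (f : ℝ → ℂ) (hfm : Measurable f) (C s : ℝ) (hs : 1 + κ ≤ s)
    (hfb : ∀ τ : ℝ, ‖f τ‖ ≤ C * (lam + |τ|) ^ (-s))
    (Bf : H →L[ℂ] H)
    (hBf : ∀ ψ : H, Bf ψ = ∫ τ : ℝ, f τ • ((U (τ • e0) * B₂ * U (-(τ • e0))) ψ)) :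
    ∃ c' : ℝ, ∀ a : M4,
      ‖B₁ * (U a * Bf * U (-a)) - (U a * Bf * U (-a)) * B₁‖ ≤ c' * Dkappa lam κ a := by

  classical
  have hs1 : (1:ℝ) < s := by linarith
  -- unitarity facts
  have hUinv : ∀ x : M4, U (-x) * U x = 1 := by
    intro x
    rw [← hUadd, neg_add_cancel, hU0]
  have hU_norm : ∀ (x : M4) (ψ : H), ‖U x ψ‖ = ‖ψ‖ := by
    intro x ψ
    have h1 : U (-x) (U x ψ) = ψ := by
      have h := hUinv x
      calc U (-x) (U x ψ) = (U (-x) * U x) ψ := rfl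
        _ = ψ := by rw [h]; rfl
    have h3 := ContinuousLinearMap.adjoint_inner_left (𝕜 := ℂ) (U x) ψ (U x ψ)
    rw [hUadj, h1] at h3
    have h4 : ‖U x ψ‖ ^ 2 = ‖ψ‖ ^ 2 := by
      rw [← inner_self_eq_norm_sq (𝕜 := ℂ) (U x ψ), ← inner_self_eq_norm_sq (𝕜 := ℂ) ψ, ← h3]
    rw [← Real.sqrt_sq (norm_nonneg (U x ψ)), ← Real.sqrt_sq (norm_nonneg ψ), h4]
  have cont_aux : ∀ g : M4 → H, Continuous g → Continuous fun x => U x (g x) := by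
    intro g hg
    rw [continuous_iff_continuousAt]
    intro x₀
    have h1 : Tendsto (fun x => U x (g x) - U x (g x₀)) (𝓝 x₀) (𝓝 0) := by
      apply squeeze_zero_norm (a := fun x => ‖g x - g x₀‖)
      · intro x
        exact le_of_eq (by rw [← map_sub, hU_norm])
      · have h2 : Tendsto (fun x => g x - g x₀) (𝓝 x₀) (𝓝 (g x₀ - g x₀)) :=
          (hg.tendsto x₀).sub tendsto_const_nhds
        rw [sub_self] at h2
        simpa using h2.norm
    have h2 : Tendsto (fun x => U x (g x₀)) (𝓝 x₀) (𝓝 (U x₀ (g x₀))) :=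
      (hUcont (g x₀)).tendsto x₀
    have h3 := h1.add h2
    rw [zero_add] at h3
    have h4 : (fun x => U x (g x) - U x (g x₀) + U x (g x₀)) = fun x => U x (g x) := by
      funext x; abel
    rw [h4] at h3
    exact h3
  -- nonnegativity of the constants
  have hD0 : Dkappa lam κ (0 : M4) = 1 := by
    have h0 : snorm3 (0 : M4) = 0 := by simp [snorm3]
    rw [Dkappa, if_pos]
    rw [h0]
    simp
  have hc0 : 0 ≤ c := by
    have h := hcomm 0
    rw [hD0, mul_one] at h
    exact le_trans (norm_nonneg _) h
  have hC0 : 0 ≤ C := by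
    have h := hfb 0
    have h2 : (0:ℝ) < (lam + |(0:ℝ)|) ^ (-s) :=
      Real.rpow_pos_of_pos (by simp [hlam]) _
    nlinarith [norm_nonneg (f 0)]
  obtain ⟨K, hK0, hcore⟩ := Stmt3Aux.core hlam hκ hs
  refine ⟨c * C * K, fun a => ?_⟩
  set r := snorm3 a with hrdef
  set t := a 0 with htdef
  set d : ℝ := max (r - |t|) 0 with hddef
  have hd0 : 0 ≤ d := le_max_right _ _
  have hDa : Dkappa lam κ a = E lam κ d := by
    rw [Dkappa_eq hlam a, ← hrdef, ← htdef]
    calc E lam κ (r - |t|) = E lam κ (r - |t| - 0) := by rw [sub_zero]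
      _ = E lam κ (max (r - |t|) 0 - 0) := E_shift le_rfl _
      _ = E lam κ d := by rw [sub_zero]
  have hdom : ∀ τ : ℝ, Dkappa lam κ (a + τ • e0) ≤ E lam κ (d - |τ|) := by
    intro τ
    rw [Dkappa_eq hlam, snorm3_shift, comp0, ← hrdef, ← htdef]
    calc E lam κ (r - |t + τ|) ≤ E lam κ (r - |t| - |τ|) :=
          E_anti hlam hκ.le (by have := abs_add_le t τ; linarith)
      _ = E lam κ (d - |τ|) := E_shift (abs_nonneg τ) _
  have hDk_nonneg : 0 ≤ Dkappa lam κ a := by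
    rw [hDa]; exact (E_pos hlam _).le
  -- operator algebra facts
  have hVa : ∀ τ : ℝ, U a * (U (τ • e0) * B₂ * U (-(τ • e0))) * U (-a)
      = U (a + τ • e0) * B₂ * U (-(a + τ • e0)) := by
    intro τ
    rw [show -(a + τ • e0) = -(τ • e0) + -a by abel, hUadd a (τ • e0),
      hUadd (-(τ • e0)) (-a)]
    simp only [mul_assoc]
  have hs_int : Integrable (fun τ : ℝ => (lam + |τ|) ^ (-s)) :=
    integrable_abs_rpow hlam hs1
  have hVcont : ∀ χ : H, Continuous fun x : M4 => (U x * B₂ * U (-x)) χ := by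
    intro χ
    have h1 : Continuous fun x : M4 => B₂ (U (-x) χ) :=
      B₂.continuous.comp ((hUcont χ).comp continuous_neg)
    have h2 := cont_aux _ h1
    simpa only [ContinuousLinearMap.mul_apply] using h2
  have hVnorm : ∀ (x : M4) (χ : H), ‖(U x * B₂ * U (-x)) χ‖ ≤ ‖B₂‖ * ‖χ‖ := by
    intro x χ
    rw [ContinuousLinearMap.mul_apply, ContinuousLinearMap.mul_apply, hU_norm]
    calc ‖B₂ (U (-x) χ)‖ ≤ ‖B₂‖ * ‖U (-x) χ‖ := B₂.le_opNorm _
      _ = ‖B₂‖ * ‖χ‖ := by rw [hU_norm]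
  have hint : ∀ (b : M4) (χ : H),
      Integrable fun τ : ℝ => f τ • ((U (b + τ • e0) * B₂ * U (-(b + τ • e0))) χ) := by
    intro b χ
    apply Integrable.mono' (hs_int.const_mul (C * (‖B₂‖ * ‖χ‖)))
    · apply AEStronglyMeasurable.smul hfm.aestronglyMeasurable
      have hcmp : Continuous fun τ : ℝ => b + τ • e0 :=
        continuous_const.add (continuous_id.smul continuous_const)
      exact ((hVcont χ).comp hcmp).aestronglyMeasurable
    · refine ae_of_all _ fun τ => ?_
      rw [norm_smul]
      calc ‖f τ‖ * ‖(U (b + τ • e0) * B₂ * U (-(b + τ • e0))) χ‖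
          ≤ (C * (lam + |τ|) ^ (-s)) * (‖B₂‖ * ‖χ‖) :=
            mul_le_mul (hfb τ) (hVnorm _ _) (norm_nonneg _)
              (mul_nonneg hC0 (Real.rpow_nonneg (by positivity) _))
        _ = C * (‖B₂‖ * ‖χ‖) * ((lam + |τ|) ^ (-s)) := by ring
  set Ba := U a * Bf * U (-a) with hBadef
  have hBa : ∀ ψ : H, Ba ψ
      = ∫ τ : ℝ, f τ • ((U (a + τ • e0) * B₂ * U (-(a + τ • e0))) ψ) := by
    intro ψ
    have h0 : Ba ψ = U a (Bf (U (-a) ψ)) := rfl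
    rw [h0, hBf (U (-a) ψ)]
    have hι := hint 0 (U (-a) ψ)
    simp only [zero_add] at hι
    rw [← ContinuousLinearMap.integral_comp_comm (U a) hι]
    congr 1
    funext τ
    rw [_root_.map_smul]
    congr 1
    rw [← hVa τ]
    rfl
  have hi1 : ∀ ψ : H, Integrable fun τ : ℝ =>
      f τ • (B₁ ((U (a + τ • e0) * B₂ * U (-(a + τ • e0))) ψ)) := by
    intro ψ
    have h := ContinuousLinearMap.integrable_comp B₁ (hint a ψ)
    simpa [_root_.map_smul] using h
  have hcommψ : ∀ ψ : H, (B₁ * Ba - Ba * B₁) ψ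
      = ∫ τ : ℝ, f τ • ((B₁ * (U (a + τ • e0) * B₂ * U (-(a + τ • e0)))
          - (U (a + τ • e0) * B₂ * U (-(a + τ • e0))) * B₁) ψ) := by
    intro ψ
    have h1 : B₁ (Ba ψ)
        = ∫ τ : ℝ, f τ • (B₁ ((U (a + τ • e0) * B₂ * U (-(a + τ • e0))) ψ)) := by
      rw [hBa ψ, ← ContinuousLinearMap.integral_comp_comm B₁ (hint a ψ)]
      congr 1
      funext τ
      rw [_root_.map_smul]
    have h2 := hBa (B₁ ψ)
    calc (B₁ * Ba - Ba * B₁) ψ = B₁ (Ba ψ) - Ba (B₁ ψ) := rfl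
      _ = ∫ τ : ℝ, (f τ • (B₁ ((U (a + τ • e0) * B₂ * U (-(a + τ • e0))) ψ))
            - f τ • ((U (a + τ • e0) * B₂ * U (-(a + τ • e0))) (B₁ ψ))) := by
          rw [h1, h2, ← integral_sub (hi1 ψ) (hint a (B₁ ψ))]
      _ = ∫ τ : ℝ, f τ • ((B₁ * (U (a + τ • e0) * B₂ * U (-(a + τ • e0)))
            - (U (a + τ • e0) * B₂ * U (-(a + τ • e0))) * B₁) ψ) := by
          congr 1
          funext τ
          simp only [smul_sub, ContinuousLinearMap.sub_apply, ContinuousLinearMap.mul_apply]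
  have hfinal : ∀ ψ : H, ‖(B₁ * Ba - Ba * B₁) ψ‖ ≤ c * C * K * Dkappa lam κ a * ‖ψ‖ := by
    intro ψ
    rw [hcommψ ψ]
    have hmaj : Integrable fun τ : ℝ =>
        (c * C * ‖ψ‖) * ((lam + |τ|) ^ (-s) * E lam κ (d - |τ|)) :=
      (g_int hlam hκ.le hs1 d).const_mul _
    have hbound : ∀ τ : ℝ, ‖f τ • ((B₁ * (U (a + τ • e0) * B₂ * U (-(a + τ • e0)))
        - (U (a + τ • e0) * B₂ * U (-(a + τ • e0))) * B₁) ψ)‖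
        ≤ (c * C * ‖ψ‖) * ((lam + |τ|) ^ (-s) * E lam κ (d - |τ|)) := by
      intro τ
      rw [norm_smul]
      have hW : ‖(B₁ * (U (a + τ • e0) * B₂ * U (-(a + τ • e0)))
          - (U (a + τ • e0) * B₂ * U (-(a + τ • e0))) * B₁) ψ‖
          ≤ c * E lam κ (d - |τ|) * ‖ψ‖ := by
        calc ‖(B₁ * (U (a + τ • e0) * B₂ * U (-(a + τ • e0)))
              - (U (a + τ • e0) * B₂ * U (-(a + τ • e0))) * B₁) ψ‖
            ≤ ‖B₁ * (U (a + τ • e0) * B₂ * U (-(a + τ • e0)))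
              - (U (a + τ • e0) * B₂ * U (-(a + τ • e0))) * B₁‖ * ‖ψ‖ :=
              ContinuousLinearMap.le_opNorm _ _
          _ ≤ (c * Dkappa lam κ (a + τ • e0)) * ‖ψ‖ :=
              mul_le_mul_of_nonneg_right (hcomm (a + τ • e0)) (norm_nonneg _)
          _ ≤ c * E lam κ (d - |τ|) * ‖ψ‖ :=
              mul_le_mul_of_nonneg_right
                (mul_le_mul_of_nonneg_left (hdom τ) hc0) (norm_nonneg _)
      calc ‖f τ‖ * ‖(B₁ * (U (a + τ • e0) * B₂ * U (-(a + τ • e0)))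
            - (U (a + τ • e0) * B₂ * U (-(a + τ • e0))) * B₁) ψ‖
          ≤ (C * (lam + |τ|) ^ (-s)) * (c * E lam κ (d - |τ|) * ‖ψ‖) :=
            mul_le_mul (hfb τ) hW (norm_nonneg _)
              (mul_nonneg hC0 (Real.rpow_nonneg (by positivity) _))
        _ = (c * C * ‖ψ‖) * ((lam + |τ|) ^ (-s) * E lam κ (d - |τ|)) := by ring
    calc ‖∫ τ : ℝ, f τ • ((B₁ * (U (a + τ • e0) * B₂ * U (-(a + τ • e0)))
          - (U (a + τ • e0) * B₂ * U (-(a + τ • e0))) * B₁) ψ)‖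
        ≤ ∫ τ : ℝ, (c * C * ‖ψ‖) * ((lam + |τ|) ^ (-s) * E lam κ (d - |τ|)) :=
          norm_integral_le_of_norm_le hmaj (ae_of_all _ hbound)
      _ = (c * C * ‖ψ‖) * ∫ τ : ℝ, (lam + |τ|) ^ (-s) * E lam κ (d - |τ|) :=
          integral_const_mul _ _
      _ ≤ (c * C * ‖ψ‖) * (K * E lam κ d) :=
          mul_le_mul_of_nonneg_left (hcore d hd0)
            (mul_nonneg (mul_nonneg hc0 hC0) (norm_nonneg ψ))
      _ = c * C * K * Dkappa lam κ a * ‖ψ‖ := by rw [hDa]; ring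
  exact ContinuousLinearMap.opNorm_le_bound _
    (mul_nonneg (mul_nonneg (mul_nonneg hc0 hC0) hK0) hDk_nonneg) hfinal
end
end
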